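/- For sequences f, g : ℕ → ℝ, the following inverse relation holds: (for all n, f_n = Σ_{k=0}^{n} w_{m,r}[n,k]_q · g_k) if and only if (for all n, g_n = Σ_{k=0}^{n} W_{m,r}[n,k]_q · f_k). -/

import Mathlib

open Finset

/-- The `q`-integer `[s]_q = (q^s - 1)/(q - 1)` for an integer `s`. -/
noncomputable def qint (q : ℝ) (s : ℤ) : ℝ := (q ^ s - 1) / (q - 1)

/-- The `(q,r)`-Whitney numbers of the second kind `W_{m,r}[n,k]_q`, with `r : ℤ` so
that both `W_{m,r}` and `W_{m,-r}` are covered: `W[0,0] = 1`, `W[n,k] = 0` for `k > n`,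
and `W[n,k] = q^(m(k-1)+r) W[n-1,k-1] + [mk+r]_q W[n-1,k]`. -/
noncomputable def qWhitney2 (q : ℝ) (m : ℕ) (r : ℤ) : ℕ → ℕ → ℝ
  | 0, 0 => 1
  | 0, _ + 1 => 0
  | n + 1, 0 => qint q r * qWhitney2 q m r n 0
  | n + 1, k + 1 =>
      q ^ (m * k + r) * qWhitney2 q m r n k
        + qint q (m * (k + 1) + r) * qWhitney2 q m r n (k + 1)

lemma qWhitney2_eq_zero (q : ℝ) (m : ℕ) (r : ℤ) :
    ∀ n k : ℕ, n < k → qWhitney2 q m r n k = 0 := by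
  intro n
  induction n with
  | zero => intro k hk; cases k with
    | zero => omega
    | succ k => simp [qWhitney2]
  | succ n ih =>
    intro k hk
    cases k with
    | zero => omega
    | succ k =>
      rw [qWhitney2, ih k (by omega), ih (k+1) (by omega)]
      ring

/-- The basis polynomials (as functions). -/
noncomputable def pb (q : ℝ) (m : ℕ) (r : ℤ) (k : ℕ) (x : ℝ) : ℝ :=
  ∏ i ∈ Finset.range k, (q ^ (-(r + (i : ℤ) * m)) * (x - qint q (r + (i : ℤ) * m)))

lemma pb_succ (q : ℝ) (hq : q ≠ 0) (m : ℕ) (r : ℤ) (k : ℕ) (x : ℝ) :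
    x * pb q m r k x =
      q ^ (r + (k : ℤ) * m) * pb q m r (k + 1) x + qint q (r + (k : ℤ) * m) * pb q m r k x := by
  have h : pb q m r (k + 1) x =
      pb q m r k x * (q ^ (-(r + (k : ℤ) * m)) * (x - qint q (r + (k : ℤ) * m))) := by
    simp only [pb, prod_range_succ]
  rw [h]
  rw [show q ^ (r + (k : ℤ) * m) * (pb q m r k x *
      (q ^ (-(r + (k : ℤ) * m)) * (x - qint q (r + (k : ℤ) * m)))) =
      (q ^ (r + (k : ℤ) * m) * q ^ (-(r + (k : ℤ) * m))) *
        (pb q m r k x * (x - qint q (r + (k : ℤ) * m))) by ring]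
  rw [← zpow_add₀ hq, add_neg_cancel, zpow_zero, one_mul]
  ring

lemma key_expansion (q : ℝ) (hq : q ≠ 0) (m : ℕ) (r : ℤ) :
    ∀ (n : ℕ) (x : ℝ),
      x ^ n = ∑ k ∈ Finset.range (n + 1), qWhitney2 q m r n k * pb q m r k x := by
  intro n
  induction n with
  | zero => intro x; simp [qWhitney2, pb]
  | succ n ih =>
    intro x
    have h1 : x ^ (n + 1) = ∑ k ∈ Finset.range (n + 1),
        qWhitney2 q m r n k * (x * pb q m r k x) := by
      rw [pow_succ, ih x, sum_mul]
      exact sum_congr rfl fun k _ => by ring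
    rw [h1]
    have h2 : ∀ k ∈ Finset.range (n + 1),
        qWhitney2 q m r n k * (x * pb q m r k x) =
          qWhitney2 q m r n k * q ^ (r + (k : ℤ) * m) * pb q m r (k + 1) x +
            qint q (r + (k : ℤ) * m) * qWhitney2 q m r n k * pb q m r k x := by
      intro k _
      rw [pb_succ q hq m r k x]; ring
    rw [sum_congr rfl h2, sum_add_distrib]
    rw [Finset.sum_range_succ' (fun j => qWhitney2 q m r (n + 1) j * pb q m r j x) (n + 1)]
    have e1 : ∀ j ∈ Finset.range (n + 1),
        qWhitney2 q m r (n + 1) (j + 1) * pb q m r (j + 1) x =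
          qWhitney2 q m r n j * q ^ (r + (j : ℤ) * m) * pb q m r (j + 1) x +
            qint q (r + ((j : ℤ) + 1) * m) * qWhitney2 q m r n (j + 1) * pb q m r (j + 1) x := by
      intro j _
      rw [qWhitney2]
      have a1 : ((m : ℤ) * j + r) = r + (j : ℤ) * m := by ring
      have a2 : ((m : ℤ) * ((j : ℤ) + 1) + r) = r + ((j : ℤ) + 1) * m := by ring
      push_cast
      rw [a1, a2]
      ring
    rw [sum_congr rfl e1, sum_add_distrib]
    have hG : ∀ j : ℕ, qint q (r + (j : ℤ) * m) * qWhitney2 q m r n j * pb q m r j x =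
        (fun k : ℕ => qint q (r + (k : ℤ) * m) * qWhitney2 q m r n k * pb q m r k x) j :=
      fun j => rfl
    have hS2 : (∑ j ∈ Finset.range (n + 1),
          qint q (r + ((j : ℤ) + 1) * m) * qWhitney2 q m r n (j + 1) * pb q m r (j + 1) x) +
          qWhitney2 q m r (n + 1) 0 * pb q m r 0 x =
        ∑ k ∈ Finset.range (n + 1), qint q (r + (k : ℤ) * m) * qWhitney2 q m r n k * pb q m r k x := by
      have h3 := Finset.sum_range_succ'
        (fun k : ℕ => qint q (r + (k : ℤ) * m) * qWhitney2 q m r n k * pb q m r k x) (n + 1)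
      have h4 := Finset.sum_range_succ
        (fun k : ℕ => qint q (r + (k : ℤ) * m) * qWhitney2 q m r n k * pb q m r k x) (n + 1)
      rw [h4, qWhitney2_eq_zero q m r n (n + 1) (by omega)] at h3
      have h5 : ∀ j ∈ Finset.range (n + 1),
          qint q (r + ((j : ℤ) + 1) * m) * qWhitney2 q m r n (j + 1) * pb q m r (j + 1) x =
            qint q (r + ((j + 1 : ℕ) : ℤ) * m) * qWhitney2 q m r n (j + 1) * pb q m r (j + 1) x := by
        intro j _; push_cast; ring_nf
      rw [sum_congr rfl h5]
      have h6 : qWhitney2 q m r (n + 1) 0 * pb q m r 0 x =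
          qint q (r + ((0 : ℕ) : ℤ) * m) * qWhitney2 q m r n 0 * pb q m r 0 x := by
        rw [qWhitney2]; push_cast; ring_nf
      rw [h6]
      linarith [h3]
    rw [add_assoc, hS2]

open Polynomial in
lemma ortho1 (q : ℝ) (hq : q ≠ 0) (m : ℕ) (r : ℤ) (w : ℕ → ℕ → ℝ)
    (hw : ∀ (n : ℕ) (x : ℝ), pb q m r n x = ∑ k ∈ Finset.range (n + 1), w n k * x ^ k) :
    ∀ n j : ℕ,
      (∑ k ∈ Finset.range (n + 1), (if j ≤ k then qWhitney2 q m r n k * w k j else 0)) =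
        if n = j then 1 else 0 := by
  intro n j
  have hP : (∑ k ∈ Finset.range (n + 1),
      C (qWhitney2 q m r n k) * (∑ l ∈ Finset.range (k + 1), C (w k l) * X ^ l)) =
      (X : ℝ[X]) ^ n := by
    apply Polynomial.funext
    intro x
    simp only [eval_finset_sum, eval_mul, eval_C, eval_pow, eval_X]
    rw [show (∑ k ∈ Finset.range (n + 1),
        qWhitney2 q m r n k * (∑ l ∈ Finset.range (k + 1), w k l * x ^ l)) =
        ∑ k ∈ Finset.range (n + 1), qWhitney2 q m r n k * pb q m r k x from
      Finset.sum_congr rfl fun k _ => by rw [hw k x]]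
    exact (key_expansion q hq m r n x).symm
  have hc := congrArg (fun p : ℝ[X] => p.coeff j) hP
  simp only [finset_sum_coeff, coeff_C_mul, coeff_X_pow, mul_ite, mul_one, mul_zero,
    Finset.sum_ite_eq, Finset.mem_range, Nat.lt_succ_iff] at hc
  rw [hc]
  by_cases h : n = j
  · simp [h]
  · simp [h, Ne.symm h]

lemma ortho2 (q : ℝ) (hq : q ≠ 0) (m : ℕ) (r : ℤ) (w : ℕ → ℕ → ℝ)
    (hw : ∀ (n : ℕ) (x : ℝ), pb q m r n x = ∑ k ∈ Finset.range (n + 1), w n k * x ^ k) :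
    ∀ n j : ℕ,
      (∑ k ∈ Finset.range (n + 1), (if j ≤ k then w n k * qWhitney2 q m r k j else 0)) =
        if n = j then 1 else 0 := by
  intro n j
  by_cases hjn : j ≤ n
  · set A : Matrix (Fin (n + 1)) (Fin (n + 1)) ℝ :=
      fun i k => if (k : ℕ) ≤ (i : ℕ) then qWhitney2 q m r i k else 0 with hA
    set B : Matrix (Fin (n + 1)) (Fin (n + 1)) ℝ :=
      fun i k => if (k : ℕ) ≤ (i : ℕ) then w i k else 0 with hB
    have hAB : A * B = 1 := by
      ext i l
      rw [Matrix.mul_apply]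
      have h1 : ∀ k : Fin (n + 1), A i k * B k l =
          (fun k : ℕ => (if k ≤ (i : ℕ) then qWhitney2 q m r i k else 0) *
            (if (l : ℕ) ≤ k then w k (l : ℕ) else 0)) (k : ℕ) := fun k => rfl
      rw [Finset.sum_congr rfl fun k _ => h1 k,
        Fin.sum_univ_eq_sum_range (fun k : ℕ => (if k ≤ (i : ℕ) then qWhitney2 q m r i k else 0) *
          (if (l : ℕ) ≤ k then w k (l : ℕ) else 0)) (n + 1)]
      have h2 : Finset.range ((i : ℕ) + 1) ⊆ Finset.range (n + 1) := by
        apply Finset.range_subset_range.2; omega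
      rw [← Finset.sum_subset h2 (by
        intro x _ hx
        simp only [Finset.mem_range, Nat.lt_succ_iff, not_le] at hx
        rw [if_neg (by omega), zero_mul])]
      have h3 : ∀ k ∈ Finset.range ((i : ℕ) + 1),
          (if k ≤ (i : ℕ) then qWhitney2 q m r i k else 0) *
            (if (l : ℕ) ≤ k then w k (l : ℕ) else 0) =
          (if (l : ℕ) ≤ k then qWhitney2 q m r i k * w k (l : ℕ) else 0) := by
        intro k hk
        simp only [Finset.mem_range, Nat.lt_succ_iff] at hk
        rw [if_pos hk]
        by_cases h : (l : ℕ) ≤ k <;> simp [h]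
      rw [Finset.sum_congr rfl h3, ortho1 q hq m r w hw (i : ℕ) (l : ℕ)]
      simp [Matrix.one_apply, Fin.ext_iff]
    have hBA : B * A = 1 := (mul_eq_one_comm).1 hAB
    have hent := congrFun (congrFun hBA (⟨n, by omega⟩ : Fin (n + 1))) (⟨j, by omega⟩ : Fin (n + 1))
    rw [Matrix.mul_apply] at hent
    have h1 : ∀ k : Fin (n + 1), B ⟨n, by omega⟩ k * A k ⟨j, by omega⟩ =
        (fun k : ℕ => (if k ≤ n then w n k else 0) *
          (if j ≤ k then qWhitney2 q m r k j else 0)) (k : ℕ) := fun k => rfl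
    rw [Finset.sum_congr rfl fun k _ => h1 k,
      Fin.sum_univ_eq_sum_range (fun k : ℕ => (if k ≤ n then w n k else 0) *
        (if j ≤ k then qWhitney2 q m r k j else 0)) (n + 1)] at hent
    have h3 : ∀ k ∈ Finset.range (n + 1),
        (if k ≤ n then w n k else 0) * (if j ≤ k then qWhitney2 q m r k j else 0) =
          (if j ≤ k then w n k * qWhitney2 q m r k j else 0) := by
      intro k hk
      simp only [Finset.mem_range, Nat.lt_succ_iff] at hk
      rw [if_pos hk]
      by_cases h : j ≤ k <;> simp [h]
    rw [Finset.sum_congr rfl h3] at hent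
    rw [hent]
    simp [Matrix.one_apply, Fin.ext_iff]
  · rw [Finset.sum_eq_zero, if_neg (by omega)]
    intro k hk
    simp only [Finset.mem_range, Nat.lt_succ_iff] at hk
    rw [if_neg (by omega)]

lemma inv_dir (u v : ℕ → ℕ → ℝ)
    (H : ∀ n j : ℕ,
      (∑ k ∈ Finset.range (n + 1), (if j ≤ k then u n k * v k j else 0)) =
        if n = j then 1 else 0)
    (a b : ℕ → ℝ) (h : ∀ n, b n = ∑ k ∈ Finset.range (n + 1), v n k * a k) :
    ∀ n, a n = ∑ k ∈ Finset.range (n + 1), u n k * b k := by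
  intro n
  have step1 : ∑ k ∈ Finset.range (n + 1), u n k * b k =
      ∑ k ∈ Finset.range (n + 1), ∑ l ∈ Finset.range (n + 1),
        (if l ≤ k then u n k * v k l * a l else 0) := by
    apply Finset.sum_congr rfl
    intro k hk
    simp only [Finset.mem_range, Nat.lt_succ_iff] at hk
    rw [h k, Finset.mul_sum]
    have h2 : Finset.range (k + 1) ⊆ Finset.range (n + 1) := by
      apply Finset.range_subset_range.2; omega
    rw [← Finset.sum_subset h2 (f := fun l => if l ≤ k then u n k * v k l * a l else 0) (by
      intro x _ hx
      simp only [Finset.mem_range, Nat.lt_succ_iff, not_le] at hx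
      beta_reduce
      rw [if_neg (by omega)])]
    apply Finset.sum_congr rfl
    intro l hl
    simp only [Finset.mem_range, Nat.lt_succ_iff] at hl
    rw [if_pos hl]; ring
  rw [step1, Finset.sum_comm]
  have step2 : ∀ l ∈ Finset.range (n + 1),
      (∑ k ∈ Finset.range (n + 1), if l ≤ k then u n k * v k l * a l else 0) =
        (if n = l then 1 else 0) * a l := by
    intro l _
    rw [← H n l, Finset.sum_mul]
    apply Finset.sum_congr rfl
    intro k _
    by_cases hc : l ≤ k <;> simp [hc]
  rw [Finset.sum_congr rfl step2]
  simp only [ite_mul, one_mul, zero_mul, Finset.sum_ite_eq, Finset.mem_range, Nat.lt_succ_iff]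
  simp

theorem qWhitney_inverse_relation (q : ℝ) (hq : 0 < q) (hq1 : q ≠ 1) (m r : ℕ) (hm : 0 < m) (hr : 0 < r)
    (w : ℕ → ℕ → ℝ)
    (hw : ∀ (n : ℕ) (x : ℝ),
      ∏ i ∈ Finset.range n, (q ^ (-((r : ℤ) + i * m)) * (x - qint q ((r : ℤ) + i * m))) =
        ∑ k ∈ Finset.range (n + 1), w n k * x ^ k)
    (f g : ℕ → ℝ) :
    (∀ n : ℕ, f n = ∑ k ∈ Finset.range (n + 1), w n k * g k) ↔
      (∀ n : ℕ, g n = ∑ k ∈ Finset.range (n + 1), qWhitney2 q m (r : ℤ) n k * f k) := by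
  have hq0 : q ≠ 0 := ne_of_gt hq
  have hw' : ∀ (n : ℕ) (x : ℝ),
      pb q m (r : ℤ) n x = ∑ k ∈ Finset.range (n + 1), w n k * x ^ k := by
    intro n x
    rw [pb]
    exact hw n x
  constructor
  · intro h n
    exact inv_dir (qWhitney2 q m (r : ℤ)) w (ortho1 q hq0 m (r : ℤ) w hw') g f h n
  · intro h n
    exact inv_dir w (qWhitney2 q m (r : ℤ)) (ortho2 q hq0 m (r : ℤ) w hw') f g h n
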